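/- Three-variable double-sum symmetry: for positive integers w1, w2, w3, any y ∈ R and n ≥ 0: w3·(w1 w2)^n · Σ_{i=0}^{w1−1} Σ_{j=0}^{w2−1} q^{w2 w3 i + w1 w3 j} · B_{n,q^{w1 w2}}(w3 y + (w3/w1) i + (w3/w2) j) = w1·(w2 w3)^n · Σ_{i=0}^{w2−1} Σ_{j=0}^{w3−1} q^{w1 w3 i + w1 w2 j} · B_{n,q^{w2 w3}}(w1 y + (w1/w2) i + (w1/w3) j). -/

import Mathlib

open Finset

/-- The q-analogue of power sums: `S_{k,q}(m) = Σ_{i=0}^m i^k q^i` (with `0^0 = 1`). -/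
def qS {R : Type*} [CommRing R] (q : R) (k m : ℕ) : R :=
  ∑ i ∈ Finset.range (m + 1), (i : R) ^ k * q ^ i

/-- q-Bernoulli numbers `b_n(q, L)`: `(q-1) b_0 = L` and for `n ≥ 1`,
`(q-1) b_n = [n = 1] - q Σ_{k<n} C(n,k) b_k`. -/
noncomputable def qb {R : Type*} [CommRing R] (q L : R) : ℕ → R
  | 0 => Ring.inverse (q - 1) * L
  | n + 1 =>
      Ring.inverse (q - 1) *
        ((if n + 1 = 1 then (1 : R) else 0) -
          q * ∑ k ∈ (Finset.range (n + 1)).attach,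
              ((n + 1).choose k.1 : R) * qb q L k.1)
  termination_by n => n
  decreasing_by exact Finset.mem_range.mp k.2

/-- q-Bernoulli polynomials `B_{n,q}(x) = Σ_{k=0}^n C(n,k) b_k(q,L) x^{n-k}`. -/
noncomputable def qB {R : Type*} [CommRing R] (q L : R) (n : ℕ) (x : R) : R :=
  ∑ k ∈ Finset.range (n + 1), (n.choose k : R) * qb q L k * x ^ (n - k)

section Aux
variable {R : Type*} [CommRing R]

/-- Binomial transform: EGF multiplication by `e^{xt}`. -/
def Wb (x : R) (F : ℕ → R) (n : ℕ) : R :=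
  ∑ k ∈ Finset.range (n + 1), (n.choose k : R) * x ^ (n - k) * F k

theorem qB_eq_Wb (Q M : R) (n : ℕ) (x : R) : qB Q M n x = Wb x (qb Q M) n :=
  Finset.sum_congr rfl fun k _ => by ring

theorem Wb_key (c d : R) {j n : ℕ} (hj : j ≤ n) :
    ∑ k ∈ Finset.range (n + 1), (n.choose k : R) * c ^ (n - k) * ((k.choose j : R) * d ^ (k - j))
      = (n.choose j : R) * (c + d) ^ (n - j) := by
  have hsub : Finset.Ico j (n+1) ⊆ Finset.range (n+1) := by
    intro k hk; simp only [Finset.mem_Ico] at hk; exact Finset.mem_range.mpr hk.2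
  have hz : ∀ k ∈ Finset.range (n+1), k ∉ Finset.Ico j (n+1) →
      (n.choose k : R) * c ^ (n - k) * ((k.choose j : R) * d ^ (k - j)) = 0 := by
    intro k hk hk'
    have : k < j := by simp only [Finset.mem_range] at hk; simp only [Finset.mem_Ico] at hk'; omega
    simp [Nat.choose_eq_zero_of_lt this]
  rw [← Finset.sum_subset hsub hz, Finset.sum_Ico_eq_sum_range,
    show n + 1 - j = (n - j) + 1 by omega]
  have h2 : ∀ m ∈ Finset.range (n - j + 1),
      (n.choose (j+m) : R) * c ^ (n - (j+m)) * (((j+m).choose j : R) * d ^ (j + m - j))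
        = (n.choose j : R) * (d ^ m * c ^ (n - j - m) * ((n-j).choose m : R)) := by
    intro m hm
    have hm' : m ≤ n - j := Nat.lt_succ_iff.mp (Finset.mem_range.mp hm)
    have hc := Nat.choose_mul (n := n) (show j ≤ j + m by omega)
    have e1 : j + m - j = m := by omega
    have e2 : n - (j + m) = n - j - m := by omega
    rw [e1, e2]
    calc (n.choose (j+m) : R) * c ^ (n-j-m) * (((j+m).choose j : R) * d ^ m)
        = ((n.choose (j+m) * (j+m).choose j : ℕ) : R) * (d ^ m * c ^ (n-j-m)) := by
          push_cast; ring
      _ = ((n.choose j * (n-j).choose m : ℕ) : R) * (d ^ m * c ^ (n-j-m)) := by rw [hc, e1]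
      _ = (n.choose j : R) * (d ^ m * c ^ (n - j - m) * ((n-j).choose m : R)) := by
          push_cast; ring
  rw [Finset.sum_congr rfl h2, ← Finset.mul_sum, ← add_pow, add_comm d c]

theorem Wb_comp (c d : R) (F : ℕ → R) (n : ℕ) :
    Wb c (fun k => Wb d F k) n = Wb (c + d) F n := by
  unfold Wb
  have step1 : ∀ k ∈ Finset.range (n+1),
      (n.choose k : R) * c ^ (n-k) *
          (∑ j ∈ Finset.range (k+1), (k.choose j : R) * d ^ (k-j) * F j)
        = ∑ j ∈ Finset.range (n+1),
            (n.choose k : R) * c ^ (n-k) * ((k.choose j : R) * d ^ (k-j) * F j) := by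
    intro k hk
    rw [Finset.mul_sum]
    refine Finset.sum_subset ?_ ?_
    · intro j hj; simp only [Finset.mem_range] at hj hk ⊢; omega
    · intro j hj hj'
      have : k < j := by simp only [Finset.mem_range] at hj hj'; omega
      simp [Nat.choose_eq_zero_of_lt this]
  rw [Finset.sum_congr rfl step1, Finset.sum_comm]
  refine Finset.sum_congr rfl fun j hj => ?_
  have hj' : j ≤ n := Nat.lt_succ_iff.mp (Finset.mem_range.mp hj)
  calc ∑ k ∈ Finset.range (n+1), (n.choose k:R)*c^(n-k)*((k.choose j:R)*d^(k-j)*F j)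
      = (∑ k ∈ Finset.range (n+1), (n.choose k:R)*c^(n-k)*((k.choose j:R)*d^(k-j))) * F j := by
        rw [Finset.sum_mul]; exact Finset.sum_congr rfl fun k _ => by ring
    _ = (n.choose j : R) * (c+d)^(n-j) * F j := by rw [Wb_key c d hj']

theorem Wb_scale (b : R) (s : R) (F : ℕ → R) (n : ℕ) :
    Wb (b * s) (fun k => b ^ k * F k) n = b ^ n * Wb s F n := by
  unfold Wb; rw [Finset.mul_sum]
  refine Finset.sum_congr rfl fun k hk => ?_
  have hk' : k ≤ n := Nat.lt_succ_iff.mp (Finset.mem_range.mp hk)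
  rw [mul_pow]
  calc (n.choose k:R) * (b^(n-k) * s^(n-k)) * (b^k * F k)
      = (b^(n-k) * b^k) * ((n.choose k:R) * s^(n-k) * F k) := by ring
    _ = b ^ n * ((n.choose k:R) * s^(n-k) * F k) := by rw [pow_sub_mul_pow b hk']

theorem Wb_smul (x r : R) (F : ℕ → R) (n : ℕ) :
    Wb x (fun k => r * F k) n = r * Wb x F n := by
  unfold Wb; rw [Finset.mul_sum]; exact Finset.sum_congr rfl fun k _ => by ring

theorem Wb_sub (x : R) (F G : ℕ → R) (n : ℕ) :
    Wb x (fun k => F k - G k) n = Wb x F n - Wb x G n := by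
  unfold Wb; rw [← Finset.sum_sub_distrib]; exact Finset.sum_congr rfl fun k _ => by ring

theorem Wb_fsum {ι : Type*} (x : R) (s : Finset ι) (F : ι → ℕ → R) (n : ℕ) :
    Wb x (fun k => ∑ i ∈ s, F i k) n = ∑ i ∈ s, Wb x (F i) n := by
  unfold Wb
  rw [Finset.sum_comm]
  exact Finset.sum_congr rfl fun k _ => by rw [Finset.mul_sum]

end Aux

section Aux2
variable {R : Type*} [CommRing R]

/-- EGF multiplication by `q^c e^{ct}`. -/
def Uo (q : R) (c : ℕ) (F : ℕ → R) : ℕ → R := fun n => q ^ c * Wb (c : R) F n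

/-- EGF multiplication by `q^c e^{ct} - 1`. -/
def Vo (q : R) (c : ℕ) (F : ℕ → R) : ℕ → R := fun n => Uo q c F n - F n

theorem Uo_comp (q : R) (c d : ℕ) (F : ℕ → R) : Uo q c (Uo q d F) = Uo q (c + d) F := by
  funext n
  unfold Uo
  rw [Wb_smul, Wb_comp, show ((c:R) + d) = ((c + d : ℕ) : R) by push_cast; ring, pow_add]
  ring

theorem Uo_smul (q : R) (c : ℕ) (r : R) (F : ℕ → R) :
    Uo q c (fun k => r * F k) = fun n => r * Uo q c F n := by
  funext n; unfold Uo; rw [Wb_smul]; ring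

theorem Uo_sub (q : R) (c : ℕ) (F G : ℕ → R) :
    Uo q c (fun k => F k - G k) = fun n => Uo q c F n - Uo q c G n := by
  funext n; unfold Uo; rw [Wb_sub]; ring

theorem Uo_fsum {ι : Type*} (q : R) (c : ℕ) (s : Finset ι) (F : ι → ℕ → R) :
    Uo q c (fun k => ∑ i ∈ s, F i k) = fun n => ∑ i ∈ s, Uo q c (F i) n := by
  funext n; unfold Uo; rw [Wb_fsum, Finset.mul_sum]

theorem Vo_smul (q : R) (c : ℕ) (r : R) (F : ℕ → R) :
    Vo q c (fun k => r * F k) = fun n => r * Vo q c F n := by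
  funext n; unfold Vo; rw [Uo_smul]; ring

theorem Vo_fsum {ι : Type*} (q : R) (c : ℕ) (s : Finset ι) (F : ι → ℕ → R) :
    Vo q c (fun k => ∑ i ∈ s, F i k) = fun n => ∑ i ∈ s, Vo q c (F i) n := by
  funext n; unfold Vo; rw [Uo_fsum, ← Finset.sum_sub_distrib]

theorem Vo_comm (q : R) (c d : ℕ) (F : ℕ → R) : Vo q c (Vo q d F) = Vo q d (Vo q c F) := by
  unfold Vo
  have h1 : ∀ (c d : ℕ), (fun n => Uo q c (fun n => Uo q d F n - F n) n
      - (Uo q d F n - F n)) = fun n => Uo q (c+d) F n - Uo q c F n - Uo q d F n + F n := by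
    intro c d
    funext n
    have := congrFun (Uo_sub q c (Uo q d F) F) n
    rw [show (fun n => Uo q d F n - F n) = (fun k => Uo q d F k - F k) from rfl, this,
      show Uo q c (Uo q d F) = Uo q (c+d) F from Uo_comp q c d F]
    ring
  rw [h1, h1]; funext n; ring

theorem Vo_cancel (q : R) (c : ℕ) (hu : IsUnit (q ^ c - 1)) (F G : ℕ → R)
    (h : ∀ n, Vo q c F n = Vo q c G n) : ∀ n, F n = G n := by
  intro n
  induction n using Nat.strong_induction_on with
  | _ n ih =>
    have hn := h n
    unfold Vo Uo Wb at hn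
    rw [Finset.sum_range_succ, Finset.sum_range_succ] at hn
    have hsum : ∑ k ∈ Finset.range n, (n.choose k : R) * (c:R) ^ (n-k) * F k
        = ∑ k ∈ Finset.range n, (n.choose k : R) * (c:R) ^ (n-k) * G k :=
      Finset.sum_congr rfl fun k hk => by rw [ih k (Finset.mem_range.mp hk)]
    rw [hsum] at hn
    simp only [Nat.choose_self, Nat.cast_one, Nat.sub_self, pow_zero] at hn
    have h2 : (q ^ c - 1) * F n = (q ^ c - 1) * G n := by linear_combination hn
    exact hu.mul_left_cancel h2
end Aux2

section Aux3
variable {R : Type*} [CommRing R]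

theorem qb_rec (Q M : R) (hu : IsUnit (Q - 1)) (n : ℕ) :
    Q * ∑ k ∈ Finset.range (n + 1), (n.choose k : R) * qb Q M k - qb Q M n
      = (if n = 1 then 1 else 0) + (if n = 0 then M else 0) := by
  cases n with
  | zero =>
    simp only [Finset.range_one, Finset.sum_singleton, Nat.choose_self, Nat.cast_one, one_mul,
      if_neg (by norm_num : (0:ℕ) ≠ 1), if_pos rfl, zero_add]
    have : Q * qb Q M 0 - qb Q M 0 = (Q - 1) * (Ring.inverse (Q-1) * M) := by
      rw [show qb Q M 0 = Ring.inverse (Q - 1) * M from by rw [qb]]; ring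
    rw [this, ← mul_assoc, Ring.mul_inverse_cancel _ hu, one_mul]; simp
  | succ m =>
    have hqb : qb Q M (m+1) = Ring.inverse (Q - 1) *
        ((if m + 1 = 1 then (1 : R) else 0) -
          Q * ∑ k ∈ Finset.range (m + 1), ((m + 1).choose k : R) * qb Q M k) := by
      rw [qb]
      rw [Finset.sum_attach (Finset.range (m+1)) (fun k => ((m + 1).choose k : R) * qb Q M k)]
    have key : (Q - 1) * qb Q M (m+1) = (if m + 1 = 1 then (1:R) else 0) -
        Q * ∑ k ∈ Finset.range (m + 1), ((m + 1).choose k : R) * qb Q M k := by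
      rw [hqb, ← mul_assoc, Ring.mul_inverse_cancel _ hu, one_mul]
    rw [Finset.sum_range_succ]
    simp only [Nat.choose_self, Nat.cast_one, one_mul,
      if_neg (by omega : ¬ m + 1 = 0), add_zero]
    linear_combination key

theorem qB_rec (Q M : R) (hu : IsUnit (Q - 1)) (n : ℕ) (x : R) :
    Q * qB Q M n (x + 1) - qB Q M n x = (n : R) * x ^ (n - 1) + M * x ^ n := by
  have h1 : qB Q M n (x + 1) = Wb x (fun k => Wb 1 (qb Q M) k) n := by
    rw [Wb_comp, qB_eq_Wb]
  have h2 : qB Q M n x = Wb x (qb Q M) n := qB_eq_Wb Q M n x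
  have h3 : Q * qB Q M n (x + 1) - qB Q M n x
      = Wb x (fun k => Q * Wb 1 (qb Q M) k - qb Q M k) n := by
    rw [h1, h2]
    have := Wb_sub x (fun k => Q * Wb 1 (qb Q M) k) (qb Q M) n
    rw [this, Wb_smul]
  rw [h3]
  have h4 : ∀ k, Q * Wb 1 (qb Q M) k - qb Q M k
      = (if k = 1 then 1 else 0) + (if k = 0 then M else 0) := by
    intro k
    rw [show Wb 1 (qb Q M) k = ∑ j ∈ Finset.range (k+1), (k.choose j : R) * qb Q M j from
      Finset.sum_congr rfl fun j _ => by rw [one_pow, mul_one]]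
    exact qb_rec Q M hu k
  rw [show Wb x (fun k => Q * Wb 1 (qb Q M) k - qb Q M k) n
      = Wb x (fun k => (if k = 1 then 1 else 0) + (if k = 0 then M else 0)) n from by
    unfold Wb
    refine Finset.sum_congr rfl fun k _ => ?_
    simp only []
    rw [← h4 k]
    rfl]
  unfold Wb
  have expand : ∀ k ∈ Finset.range (n+1),
      (n.choose k : R) * x ^ (n-k) * ((if k = 1 then 1 else 0) + (if k = 0 then M else 0))
        = (if k = 1 then (n.choose k : R) * x ^ (n-k) else 0)
          + (if k = 0 then (n.choose k : R) * x ^ (n-k) * M else 0) := by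
    intro k _
    by_cases h1 : k = 1 <;> by_cases h0 : k = 0 <;> simp [h1, h0] <;> ring
  rw [Finset.sum_congr rfl expand, Finset.sum_add_distrib,
    Finset.sum_ite_eq' (Finset.range (n+1)) 1 (fun k => (n.choose k : R) * x ^ (n-k)),
    Finset.sum_ite_eq' (Finset.range (n+1)) 0 (fun k => (n.choose k : R) * x ^ (n-k) * M)]
  simp only [Finset.mem_range, Nat.choose_zero_right, Nat.cast_one, one_mul, Nat.sub_zero,
    Nat.choose_one_right]
  rw [if_pos (by omega : 0 < n + 1)]
  by_cases hn : 1 < n + 1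
  · rw [if_pos hn]; ring
  · rw [if_neg hn]
    have : n = 0 := by omega
    subst this
    simp

end Aux3

section Aux4
variable {R : Type*} [CommRing R] [Algebra ℚ R]

/-- The coefficient sequence of `b(t+L)e^{bxt}/(q^b e^{bt}-1)`. -/
noncomputable def Hf (q L : R) (b : ℕ) (x : R) : ℕ → R :=
  fun m => (b : R) ^ m * qB (q ^ b) ((b : R) * L) m x

theorem shift_lemma (q L : R) {b : ℕ} (hb : 0 < b) (c : ℕ) (z : R) (n : ℕ) :
    Wb (c : R) (fun k => Hf q L b z k) n
      = Hf q L b (z + algebraMap ℚ R ((c : ℚ) / (b : ℚ))) n := by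
  have hb0 : (b : ℚ) ≠ 0 := Nat.cast_ne_zero.mpr hb.ne'
  have hbs : (b : R) * algebraMap ℚ R ((c : ℚ) / (b : ℚ)) = (c : R) := by
    rw [show (b : R) = algebraMap ℚ R (b : ℚ) by simp, ← map_mul]
    rw [show (b : ℚ) * ((c : ℚ) / (b : ℚ)) = (c : ℚ) by field_simp]
    simp
  unfold Hf
  rw [← hbs, Wb_scale]
  congr 1
  simp only [qB_eq_Wb]
  rw [Wb_comp, add_comm]

theorem Uo_Hf (q L : R) {b : ℕ} (hb : 0 < b) (c : ℕ) (z : R) (n : ℕ) :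
    Uo q c (Hf q L b z) n
      = q ^ c * Hf q L b (z + algebraMap ℚ R ((c : ℚ) / (b : ℚ))) n := by
  unfold Uo
  rw [show Wb (c : R) (Hf q L b z) n = Wb (c : R) (fun k => Hf q L b z k) n from rfl,
    shift_lemma q L hb c z n]

theorem telescope_lemma (q L : R) {b : ℕ} (hb : 0 < b) (c a : ℕ) (x : R) :
    Vo q c (fun m => ∑ i ∈ Finset.range a,
        q ^ (c * i) * Hf q L b (x + algebraMap ℚ R ((c : ℚ) * (i : ℚ) / (b : ℚ))) m)
      = Vo q (c * a) (Hf q L b x) := by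
  set G : ℕ → ℕ → R := fun i m =>
    q ^ (c * i) * Hf q L b (x + algebraMap ℚ R ((c : ℚ) * (i : ℚ) / (b : ℚ))) m with hG
  have hstep : ∀ i, Uo q c (G i) = G (i + 1) := by
    intro i
    funext m
    rw [hG]
    simp only []
    rw [show (fun m => q ^ (c * i) *
        Hf q L b (x + algebraMap ℚ R ((c:ℚ) * (i:ℚ) / (b:ℚ))) m) =
      (fun k => q ^ (c * i) *
        Hf q L b (x + algebraMap ℚ R ((c:ℚ) * (i:ℚ) / (b:ℚ))) k) from rfl]
    rw [congrFun (Uo_smul q c (q ^ (c * i))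
      (Hf q L b (x + algebraMap ℚ R ((c:ℚ) * (i:ℚ) / (b:ℚ))))) m]
    rw [Uo_Hf q L hb c _ m]
    rw [← mul_assoc, ← pow_add]
    have e1 : c * i + c = c * (i + 1) := by ring
    have e2 : x + algebraMap ℚ R ((c:ℚ) * (i:ℚ) / (b:ℚ)) + algebraMap ℚ R ((c:ℚ) / (b:ℚ))
        = x + algebraMap ℚ R ((c:ℚ) * (((i+1):ℕ):ℚ) / (b:ℚ)) := by
      rw [add_assoc, ← map_add,
        show (c:ℚ) * (i:ℚ) / (b:ℚ) + (c:ℚ) / (b:ℚ) = (c:ℚ) * (((i+1):ℕ):ℚ) / (b:ℚ) by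
          push_cast; ring]
    rw [e1, e2]
  have h0 : G 0 = Hf q L b x := by
    funext m
    rw [hG]
    simp only [Nat.mul_zero, pow_zero, one_mul, Nat.cast_zero, mul_zero, zero_div, map_zero,
      add_zero]
  have ha : G a = Uo q (c * a) (Hf q L b x) := by
    funext m
    rw [hG]
    simp only []
    rw [Uo_Hf q L hb (c * a) x m]
    congr 2
    push_cast
    ring
  funext m
  unfold Vo
  rw [show (fun m => ∑ i ∈ Finset.range a, G i m) = (fun k => ∑ i ∈ Finset.range a, G i k) from rfl]
  rw [congrFun (Uo_fsum q c (Finset.range a) G) m]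
  rw [← Finset.sum_sub_distrib]
  have : ∀ i ∈ Finset.range a, Uo q c (G i) m - G i m = G (i+1) m - G i m := by
    intro i _; rw [hstep i]
  rw [Finset.sum_congr rfl this, Finset.sum_range_sub (fun i => G i m), ha, h0]

theorem Vbase (q L : R) (b : ℕ) (hu : IsUnit (q ^ b - 1)) (x : R) (n : ℕ) :
    Vo q b (Hf q L b x) n = (b : R) ^ n * ((n : R) * x ^ (n - 1) + (b : R) * L * x ^ n) := by
  unfold Vo Uo Hf
  have h1 : Wb (b : R) (fun m => (b:R)^m * qB (q^b) ((b:R)*L) m x) n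
      = (b:R)^n * Wb 1 (fun k => qB (q^b) ((b:R)*L) k x) n := by
    rw [← Wb_scale (b:R) 1 (fun k => qB (q^b) ((b:R)*L) k x) n, mul_one]
  rw [show Wb (b:R) (fun m => (b:R)^m * qB (q^b) ((b:R)*L) m x) n
      = (b:R)^n * Wb 1 (fun k => qB (q^b) ((b:R)*L) k x) n from h1]
  have h2 : Wb 1 (fun k => qB (q^b) ((b:R)*L) k x) n = qB (q^b) ((b:R)*L) n (x + 1) := by
    simp only [qB_eq_Wb]
    rw [Wb_comp, add_comm]
  rw [h2]
  have h3 := qB_rec (q^b) ((b:R)*L) hu n x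
  linear_combination (b:R)^n * h3
end Aux4

section Aux4b
variable {R : Type*} [CommRing R]

theorem Vo_smul2 (q r : R) (a b : ℕ) (Z : ℕ → R) :
    Vo q a (Vo q b (fun m => r * Z m)) = fun n => r * Vo q a (Vo q b Z) n := by
  rw [show (fun m => r * Z m) = (fun k => r * Z k) from rfl, Vo_smul q b r Z,
    Vo_smul q a r (Vo q b Z)]

theorem Vo_smul3 (q r : R) (a b c : ℕ) (Z : ℕ → R) :
    Vo q a (Vo q b (Vo q c (fun m => r * Z m)))
      = fun n => r * Vo q a (Vo q b (Vo q c Z)) n := by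
  rw [show (fun m => r * Z m) = (fun k => r * Z k) from rfl, Vo_smul q c r Z,
    Vo_smul q b r (Vo q c Z), Vo_smul q a r (Vo q b (Vo q c Z))]
end Aux4b

section Aux5
variable {R : Type*} [CommRing R]

theorem Vo_sum_smul (q : R) (c : ℕ) {ι : Type*} (s : Finset ι) (r : ι → R) (F : ι → ℕ → R) :
    Vo q c (fun m => ∑ i ∈ s, r i * F i m) = fun n => ∑ i ∈ s, r i * Vo q c (F i) n := by
  rw [show (fun m => ∑ i ∈ s, r i * F i m)
      = fun m => ∑ i ∈ s, (fun k => r i * F i k) m from rfl, Vo_fsum]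
  funext n
  exact Finset.sum_congr rfl fun i _ => by rw [Vo_smul]
end Aux5

theorem symm_three_var_doublesum {R : Type*} [CommRing R] [Algebra ℚ R] (q L : R)
    (hq : ∀ w : ℕ, 0 < w → IsUnit (q ^ w - 1)) (w1 w2 w3 : ℕ) (hw1 : 0 < w1) (hw2 : 0 < w2) (hw3 : 0 < w3) (y : R) (n : ℕ) :
    (w3 : R) * ((w1 : R) * (w2 : R)) ^ n * ∑ i ∈ Finset.range w1, ∑ j ∈ Finset.range w2,
        q ^ (w2 * w3 * i + w1 * w3 * j) *
          qB (q ^ (w1 * w2)) (((w1 * w2 : ℕ) : R) * L) n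
            ((w3 : R) * y + algebraMap ℚ R ((w3 : ℚ) * (i : ℚ) / (w1 : ℚ) + (w3 : ℚ) * (j : ℚ) / (w2 : ℚ)))
      = (w1 : R) * ((w2 : R) * (w3 : R)) ^ n * ∑ i ∈ Finset.range w2, ∑ j ∈ Finset.range w3,
          q ^ (w1 * w3 * i + w1 * w2 * j) *
            qB (q ^ (w2 * w3)) (((w2 * w3 : ℕ) : R) * L) n
              ((w1 : R) * y + algebraMap ℚ R ((w1 : ℚ) * (i : ℚ) / (w2 : ℚ) + (w1 : ℚ) * (j : ℚ) / (w3 : ℚ))) := by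

  have h1Q : (w1 : ℚ) ≠ 0 := Nat.cast_ne_zero.mpr hw1.ne'
  have h2Q : (w2 : ℚ) ≠ 0 := Nat.cast_ne_zero.mpr hw2.ne'
  have h3Q : (w3 : ℚ) ≠ 0 := Nat.cast_ne_zero.mpr hw3.ne'
  have hb1 : 0 < w1 * w2 := Nat.mul_pos hw1 hw2
  have hc1 : 0 < w2 * w3 := Nat.mul_pos hw2 hw3
  have hc2 : 0 < w1 * w3 := Nat.mul_pos hw1 hw3
  -- base points and shifted base points
  set X : ℕ → R := fun i => (w3 : R) * y +
    algebraMap ℚ R (((w2 * w3 : ℕ) : ℚ) * (i : ℚ) / ((w1 * w2 : ℕ) : ℚ)) with hX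
  set X' : ℕ → R := fun i => (w1 : R) * y +
    algebraMap ℚ R (((w1 * w3 : ℕ) : ℚ) * (i : ℚ) / ((w2 * w3 : ℕ) : ℚ)) with hX'
  -- the double sums as sequences
  set A : ℕ → R := fun m => ∑ i ∈ Finset.range w1, q ^ ((w2 * w3) * i) *
      (∑ j ∈ Finset.range w2, q ^ ((w1 * w3) * j) *
        Hf q L (w1 * w2) (X i + algebraMap ℚ R
          (((w1 * w3 : ℕ) : ℚ) * (j : ℚ) / ((w1 * w2 : ℕ) : ℚ))) m) with hA
  set A' : ℕ → R := fun m => ∑ i ∈ Finset.range w2, q ^ ((w1 * w3) * i) *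
      (∑ j ∈ Finset.range w3, q ^ ((w1 * w2) * j) *
        Hf q L (w2 * w3) (X' i + algebraMap ℚ R
          (((w1 * w2 : ℕ) : ℚ) * (j : ℚ) / ((w2 * w3 : ℕ) : ℚ))) m) with hA'
  -- Step 1: rewrite the goal in terms of A and A'
  have goal_eq : ((w3 : R) * A n = (w1 : R) * A' n) →
      ((w3 : R) * ((w1 : R) * (w2 : R)) ^ n * ∑ i ∈ Finset.range w1, ∑ j ∈ Finset.range w2,
        q ^ (w2 * w3 * i + w1 * w3 * j) *
          qB (q ^ (w1 * w2)) (((w1 * w2 : ℕ) : R) * L) n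
            ((w3 : R) * y + algebraMap ℚ R ((w3 : ℚ) * (i : ℚ) / (w1 : ℚ) + (w3 : ℚ) * (j : ℚ) / (w2 : ℚ)))
      = (w1 : R) * ((w2 : R) * (w3 : R)) ^ n * ∑ i ∈ Finset.range w2, ∑ j ∈ Finset.range w3,
          q ^ (w1 * w3 * i + w1 * w2 * j) *
            qB (q ^ (w2 * w3)) (((w2 * w3 : ℕ) : R) * L) n
              ((w1 : R) * y + algebraMap ℚ R ((w1 : ℚ) * (i : ℚ) / (w2 : ℚ) + (w1 : ℚ) * (j : ℚ) / (w3 : ℚ)))) := by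
    intro hkey
    have hAn : ((w1 : R) * (w2 : R)) ^ n * ∑ i ∈ Finset.range w1, ∑ j ∈ Finset.range w2,
        q ^ (w2 * w3 * i + w1 * w3 * j) *
          qB (q ^ (w1 * w2)) (((w1 * w2 : ℕ) : R) * L) n
            ((w3 : R) * y + algebraMap ℚ R ((w3 : ℚ) * (i : ℚ) / (w1 : ℚ) + (w3 : ℚ) * (j : ℚ) / (w2 : ℚ)))
        = A n := by
      rw [hA, Finset.mul_sum]
      refine Finset.sum_congr rfl fun i _ => ?_
      rw [Finset.mul_sum, Finset.mul_sum]
      refine Finset.sum_congr rfl fun j _ => ?_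
      unfold Hf
      rw [pow_add]
      have harg : (w3 : R) * y + algebraMap ℚ R
            ((w3 : ℚ) * (i : ℚ) / (w1 : ℚ) + (w3 : ℚ) * (j : ℚ) / (w2 : ℚ))
          = X i + algebraMap ℚ R (((w1 * w3 : ℕ) : ℚ) * (j : ℚ) / ((w1 * w2 : ℕ) : ℚ)) := by
        rw [hX]
        rw [add_assoc, ← map_add]
        congr 1
        congr 1
        push_cast
        field_simp
      rw [harg]
      push_cast
      ring
    have hAn' : ((w2 : R) * (w3 : R)) ^ n * ∑ i ∈ Finset.range w2, ∑ j ∈ Finset.range w3,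
        q ^ (w1 * w3 * i + w1 * w2 * j) *
          qB (q ^ (w2 * w3)) (((w2 * w3 : ℕ) : R) * L) n
            ((w1 : R) * y + algebraMap ℚ R ((w1 : ℚ) * (i : ℚ) / (w2 : ℚ) + (w1 : ℚ) * (j : ℚ) / (w3 : ℚ)))
        = A' n := by
      rw [hA', Finset.mul_sum]
      refine Finset.sum_congr rfl fun i _ => ?_
      rw [Finset.mul_sum, Finset.mul_sum]
      refine Finset.sum_congr rfl fun j _ => ?_
      unfold Hf
      rw [pow_add]
      have harg : (w1 : R) * y + algebraMap ℚ R
            ((w1 : ℚ) * (i : ℚ) / (w2 : ℚ) + (w1 : ℚ) * (j : ℚ) / (w3 : ℚ))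
          = X' i + algebraMap ℚ R (((w1 * w2 : ℕ) : ℚ) * (j : ℚ) / ((w2 * w3 : ℕ) : ℚ)) := by
        rw [hX']
        rw [add_assoc, ← map_add]
        congr 1
        congr 1
        push_cast
        field_simp
      rw [harg]
      push_cast
      ring
    rw [mul_assoc, mul_assoc, hAn, hAn', hkey]
  apply goal_eq
  -- units
  have hub1 := hq (w1*w2) hb1
  have huc1 := hq (w2*w3) hc1
  have huc2 := hq (w1*w3) hc2
  -- intermediate sequences
  set B : ℕ → R := fun m => ∑ i ∈ Finset.range w1,
      q ^ ((w2*w3)*i) * Hf q L (w1*w2) (X i) m with hB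
  set B' : ℕ → R := fun m => ∑ i ∈ Finset.range w2,
      q ^ ((w1*w3)*i) * Hf q L (w2*w3) (X' i) m with hB'
  set HA : ℕ → R := Hf q L (w1*w2) ((w3:R)*y) with hHA
  set HA' : ℕ → R := Hf q L (w2*w3) ((w1:R)*y) with hHA'
  -- first telescopes (inner sums)
  have FA1 : Vo q (w1*w3) A = Vo q (w1*w2*w3) B := by
    funext mm
    rw [hA]
    have h1 := congrFun (Vo_sum_smul q (w1*w3) (Finset.range w1)
      (fun i => q ^ ((w2*w3)*i))
      (fun i m => ∑ j ∈ Finset.range w2, q ^ ((w1*w3)*j) *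
        Hf q L (w1*w2) (X i + algebraMap ℚ R
          (((w1*w3 : ℕ) : ℚ) * (j:ℚ) / ((w1*w2 : ℕ) : ℚ))) m)) mm
    rw [h1]
    have h2 : ∀ i ∈ Finset.range w1,
        q ^ ((w2*w3)*i) * Vo q (w1*w3) (fun m => ∑ j ∈ Finset.range w2, q ^ ((w1*w3)*j) *
          Hf q L (w1*w2) (X i + algebraMap ℚ R
            (((w1*w3 : ℕ) : ℚ) * (j:ℚ) / ((w1*w2 : ℕ) : ℚ))) m) mm
        = q ^ ((w2*w3)*i) * Vo q (w1*w2*w3) (Hf q L (w1*w2) (X i)) mm := by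
      intro i _
      congr 1
      rw [telescope_lemma q L hb1 (w1*w3) w2 (X i),
        show (w1*w3)*w2 = w1*w2*w3 from by ring]
    rw [Finset.sum_congr rfl h2]
    have h3 := congrFun (Vo_sum_smul q (w1*w2*w3) (Finset.range w1)
      (fun i => q ^ ((w2*w3)*i)) (fun i => Hf q L (w1*w2) (X i))) mm
    rw [hB]
    exact h3.symm
  have FA1' : Vo q (w1*w2) A' = Vo q (w1*w2*w3) B' := by
    funext mm
    rw [hA']
    have h1 := congrFun (Vo_sum_smul q (w1*w2) (Finset.range w2)
      (fun i => q ^ ((w1*w3)*i))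
      (fun i m => ∑ j ∈ Finset.range w3, q ^ ((w1*w2)*j) *
        Hf q L (w2*w3) (X' i + algebraMap ℚ R
          (((w1*w2 : ℕ) : ℚ) * (j:ℚ) / ((w2*w3 : ℕ) : ℚ))) m)) mm
    rw [h1]
    have h2 : ∀ i ∈ Finset.range w2,
        q ^ ((w1*w3)*i) * Vo q (w1*w2) (fun m => ∑ j ∈ Finset.range w3, q ^ ((w1*w2)*j) *
          Hf q L (w2*w3) (X' i + algebraMap ℚ R
            (((w1*w2 : ℕ) : ℚ) * (j:ℚ) / ((w2*w3 : ℕ) : ℚ))) m) mm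
        = q ^ ((w1*w3)*i) * Vo q (w1*w2*w3) (Hf q L (w2*w3) (X' i)) mm := by
      intro i _
      congr 1
      rw [telescope_lemma q L hc1 (w1*w2) w3 (X' i),
        show (w1*w2)*w3 = w1*w2*w3 from by ring]
    rw [Finset.sum_congr rfl h2]
    have h3 := congrFun (Vo_sum_smul q (w1*w2*w3) (Finset.range w2)
      (fun i => q ^ ((w1*w3)*i)) (fun i => Hf q L (w2*w3) (X' i))) mm
    rw [hB']
    exact h3.symm
  -- second telescopes (outer sums)
  have FA2 : Vo q (w2*w3) B = Vo q (w1*w2*w3) HA := by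
    rw [hB, hX, hHA]
    simp only []
    rw [telescope_lemma q L hb1 (w2*w3) w1 ((w3:R)*y),
      show (w2*w3)*w1 = w1*w2*w3 from by ring]
  have FA2' : Vo q (w1*w3) B' = Vo q (w1*w2*w3) HA' := by
    rw [hB', hX', hHA']
    simp only []
    rw [telescope_lemma q L hc1 (w1*w3) w2 ((w1:R)*y),
      show (w1*w3)*w2 = w1*w2*w3 from by ring]
  -- full chains
  have chainA : Vo q (w1*w2) (Vo q (w2*w3) (Vo q (w1*w3) A))
      = Vo q (w1*w2*w3) (Vo q (w1*w2*w3) (Vo q (w1*w2) HA)) := by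
    rw [FA1, Vo_comm q (w2*w3) (w1*w2*w3) B, FA2,
      Vo_comm q (w1*w2) (w1*w2*w3) (Vo q (w1*w2*w3) HA),
      Vo_comm q (w1*w2) (w1*w2*w3) HA]
  have chainA' : Vo q (w1*w2) (Vo q (w2*w3) (Vo q (w1*w3) A'))
      = Vo q (w1*w2*w3) (Vo q (w1*w2*w3) (Vo q (w2*w3) HA')) := by
    rw [Vo_comm q (w2*w3) (w1*w3) A', Vo_comm q (w1*w2) (w1*w3) (Vo q (w2*w3) A'),
      Vo_comm q (w1*w2) (w2*w3) A', FA1',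
      Vo_comm q (w2*w3) (w1*w2*w3) B',
      Vo_comm q (w1*w3) (w1*w2*w3) (Vo q (w2*w3) B'),
      Vo_comm q (w1*w3) (w2*w3) B', FA2',
      Vo_comm q (w2*w3) (w1*w2*w3) HA']
  -- base comparison
  have Scompare : (fun m => (w3:R) * Vo q (w1*w2) HA m)
      = (fun m => (w1:R) * Vo q (w2*w3) HA' m) := by
    funext m
    rw [hHA, hHA', Vbase q L (w1*w2) hub1 ((w3:R)*y) m,
      Vbase q L (w2*w3) huc1 ((w1:R)*y) m]
    cases m with
    | zero => push_cast; ring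
    | succ k =>
      push_cast [Nat.succ_sub_one]
      ring
  -- main equality after applying the three operators
  have big : ∀ mm, Vo q (w1*w2) (Vo q (w2*w3) (Vo q (w1*w3) (fun m => (w3:R) * A m))) mm
      = Vo q (w1*w2) (Vo q (w2*w3) (Vo q (w1*w3) (fun m => (w1:R) * A' m))) mm := by
    intro mm
    rw [Vo_smul3 q (w3:R) (w1*w2) (w2*w3) (w1*w3) A,
      Vo_smul3 q (w1:R) (w1*w2) (w2*w3) (w1*w3) A']
    simp only []
    rw [chainA, chainA']
    calc (w3:R) * Vo q (w1*w2*w3) (Vo q (w1*w2*w3) (Vo q (w1*w2) HA)) mm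
        = Vo q (w1*w2*w3) (Vo q (w1*w2*w3) (fun m => (w3:R) * Vo q (w1*w2) HA m)) mm :=
          (congrFun (Vo_smul2 q (w3:R) (w1*w2*w3) (w1*w2*w3) (Vo q (w1*w2) HA)) mm).symm
      _ = Vo q (w1*w2*w3) (Vo q (w1*w2*w3) (fun m => (w1:R) * Vo q (w2*w3) HA' m)) mm := by
          rw [Scompare]
      _ = (w1:R) * Vo q (w1*w2*w3) (Vo q (w1*w2*w3) (Vo q (w2*w3) HA')) mm :=
          congrFun (Vo_smul2 q (w1:R) (w1*w2*w3) (w1*w2*w3) (Vo q (w2*w3) HA')) mm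
  -- cancel the three invertible operators
  have c3 := Vo_cancel q (w1*w2) hub1
    (Vo q (w2*w3) (Vo q (w1*w3) (fun m => (w3:R) * A m)))
    (Vo q (w2*w3) (Vo q (w1*w3) (fun m => (w1:R) * A' m))) big
  have c2' := Vo_cancel q (w2*w3) huc1
    (Vo q (w1*w3) (fun m => (w3:R) * A m))
    (Vo q (w1*w3) (fun m => (w1:R) * A' m)) c3
  have c1' := Vo_cancel q (w1*w3) huc2
    (fun m => (w3:R) * A m) (fun m => (w1:R) * A' m) c2'
  exact c1' n
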